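/- Fix ε > 0 and real numbers a_1, a_2, a_3, b_1, b_2, b_3, c with a_i > −1−ε and b_i > −1−ε for i = 1,2,3 and a_2 + b_2 + c > −2−ε. Then there is a constant C such that for all real v_1 < v_2 < v_3 with v_3 − v_2 > v_2 − v_1, ∫_{v_1}^{v_2} ∫_{v_2}^{v_3} |1+i(u_1−u_2)|^c ∏_{i=1}^{3} |1+i(u_1−v_i)|^{a_i} |1+i(u_2−v_i)|^{b_i} du_2 du_1 ≤ C |1+i(v_3−v_1)|^{(κ−δ)/2+ε} |1+i(v_3−v_2)|^{(κ−δ)/2+ε} |1+i(v_2−v_1)|^{δ+ε}, where κ = a_1+a_2+a_3+b_1+b_2+b_3+c+2 and δ = min( a_1+a_2+1, a_1+a_2+b_1+c+1 ). -/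

import Mathlib

open MeasureTheory Real intervalIntegral

noncomputable section

namespace S9

lemma abs_eq (t : ℝ) : ‖1 + Complex.I * t‖ = Real.sqrt (1 + t^2) := by
  rw [Complex.norm_def, Complex.normSq_apply]
  congr 1
  simp [Complex.add_re, Complex.add_im, Complex.mul_re, Complex.mul_im]
  ring

lemma sqrt_pos' (t : ℝ) : 0 < Real.sqrt (1 + t^2) := by
  apply Real.sqrt_pos.2; positivity

lemma one_le_sqrt (t : ℝ) : 1 ≤ Real.sqrt (1 + t^2) := by
  rw [Real.le_sqrt (by norm_num) (by positivity)]
  nlinarith [sq_nonneg t]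

lemma sqrt_le_one_add {t : ℝ} (ht : 0 ≤ t) : Real.sqrt (1 + t^2) ≤ 1 + t := by
  rw [show (1:ℝ) + t = Real.sqrt ((1+t)^2) by rw [Real.sqrt_sq (by linarith)]]
  apply Real.sqrt_le_sqrt; nlinarith

lemma one_add_le_two_sqrt {t : ℝ} (ht : 0 ≤ t) : 1 + t ≤ 2 * Real.sqrt (1 + t^2) := by
  nlinarith [sq_nonneg (1 - t), Real.sq_sqrt (show (0:ℝ) ≤ 1 + t^2 by positivity),
    Real.sqrt_nonneg (1 + t^2), sq_nonneg (1 + t - 2*Real.sqrt (1+t^2))]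

lemma rpow_ratio {A W : ℝ} (hA : 0 < A) (hW : 0 < W) (h1 : A ≤ 2*W) (h2 : W ≤ 2*A) (e : ℝ) :
    W ^ e ≤ 2 ^ |e| * A ^ e := by
  rcases le_or_gt 0 e with he | he
  · rw [abs_of_nonneg he]
    calc W ^ e ≤ (2*A) ^ e := Real.rpow_le_rpow hW.le h2 he
    _ = 2 ^ e * A ^ e := Real.mul_rpow (by norm_num) hA.le
  · rw [abs_of_neg he]
    have hAW : A / 2 ≤ W := by linarith
    calc W ^ e ≤ (A/2) ^ e := Real.rpow_le_rpow_of_nonpos (by linarith) hAW he.le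
    _ = 2 ^ (-e) * A ^ e := by
        rw [show A/2 = 2⁻¹ * A by ring, Real.mul_rpow (by norm_num) hA.le,
          Real.inv_rpow (by norm_num), ← Real.rpow_neg (by norm_num)]

/-- convert sqrt-power to (1+t)-power -/
lemma w_pow_le {t : ℝ} (ht : 0 ≤ t) (e : ℝ) :
    Real.sqrt (1 + t^2) ^ e ≤ 2 ^ |e| * (1 + t) ^ e :=
  rpow_ratio (by linarith) (sqrt_pos' t) (one_add_le_two_sqrt ht)
    (by nlinarith [sqrt_le_one_add ht]) e

/-- converse direction -/
lemma one_add_pow_le {t : ℝ} (ht : 0 ≤ t) (e : ℝ) :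
    (1 + t) ^ e ≤ 2 ^ |e| * Real.sqrt (1 + t^2) ^ e :=
  rpow_ratio (sqrt_pos' t) (by linarith) (by nlinarith [sqrt_le_one_add ht])
    (one_add_le_two_sqrt ht) e

lemma sum_split {A B : ℝ} (hA : 1 ≤ A) (hB : 1 ≤ B) (e : ℝ) :
    (A + B - 1) ^ e ≤ 2 ^ |e| * (A ^ e + B ^ e) := by
  have key : ∀ X Y : ℝ, 1 ≤ X → 1 ≤ Y → X ≤ Y → (X + Y - 1) ^ e ≤ 2 ^ |e| * (X ^ e + Y ^ e) := by
    intro X Y hX hY hXY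
    have hY0 : (0:ℝ) < Y := by linarith
    rcases le_or_gt 0 e with he | he
    · rw [abs_of_nonneg he]
      calc (X + Y - 1) ^ e ≤ (2*Y) ^ e := Real.rpow_le_rpow (by linarith) (by linarith) he
      _ = 2 ^ e * Y ^ e := Real.mul_rpow (by norm_num) hY0.le
      _ ≤ 2 ^ e * (X ^ e + Y ^ e) := by
          have : 0 ≤ X ^ e := Real.rpow_nonneg (by linarith) e
          have h2 : (0:ℝ) < 2 ^ e := Real.rpow_pos_of_pos (by norm_num) e
          nlinarith
    · rw [abs_of_neg he]
      have h1 : (X + Y - 1) ^ e ≤ Y ^ e :=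
        Real.rpow_le_rpow_of_nonpos hY0 (by linarith) he.le
      have h2 : (1:ℝ) ≤ 2 ^ (-e) := Real.one_le_rpow (by norm_num) (by linarith)
      have h3 : 0 ≤ X ^ e := Real.rpow_nonneg (by linarith) e
      have h4 : 0 ≤ Y ^ e := Real.rpow_nonneg hY0.le e
      nlinarith
  rcases le_total A B with h | h
  · exact key A B hA hB h
  · have := key B A hB hA h
    calc (A + B - 1) ^ e = (B + A - 1) ^ e := by rw [show A + B - 1 = B + A - 1 by ring]
    _ ≤ 2 ^ |e| * (B ^ e + A ^ e) := this
    _ = 2 ^ |e| * (A ^ e + B ^ e) := by ring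


lemma rpow_split {x a b c : ℝ} (hx : 0 < x) (h : c = a + b) :
    x ^ c = x ^ a * x ^ b := by rw [h, Real.rpow_add hx]

lemma prod_split {u v w e θ : ℝ} (hv : 1 ≤ v) (hw : 1 ≤ w) (hvu : v ≤ u) (hwu : w ≤ u)
    (he : e ≤ 0) (hθ : 0 ≤ θ) (hθ1 : θ ≤ 1) :
    u ^ e ≤ v ^ (θ * e) * w ^ ((1 - θ) * e) := by
  have hu : (0:ℝ) < u := by linarith
  have h1 : u ^ (θ * e) ≤ v ^ (θ * e) :=
    Real.rpow_le_rpow_of_nonpos (by linarith) hvu (by nlinarith)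
  have h2 : u ^ ((1 - θ) * e) ≤ w ^ ((1 - θ) * e) :=
    Real.rpow_le_rpow_of_nonpos (by linarith) hwu (by nlinarith)
  calc u ^ e = u ^ (θ * e) * u ^ ((1 - θ) * e) := by
        rw [← Real.rpow_add hu]; ring_nf
  _ ≤ v ^ (θ * e) * w ^ ((1 - θ) * e) := by
      apply mul_le_mul h1 h2 (Real.rpow_nonneg hu.le _) (Real.rpow_nonneg (by linarith) _)

lemma pow_two_le {A W e : ℝ} (hW : 0 ≤ W) (h : W ≤ 2 * A) (he : 0 ≤ e) :
    W ^ e ≤ 2 ^ e * A ^ e := by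
  have hA : 0 ≤ A := by linarith
  calc W ^ e ≤ (2*A) ^ e := Real.rpow_le_rpow hW h he
  _ = 2 ^ e * A ^ e := Real.mul_rpow (by norm_num) hA

lemma nonpos_exp_mono {A W e : ℝ} (hA : 0 < A) (h : A ≤ W) (he : e ≤ 0) :
    W ^ e ≤ A ^ e := Real.rpow_le_rpow_of_nonpos hA h he

lemma K1 {ρ D : ℝ} (hρ : -1 < ρ) (hD : 0 ≤ D) :
    ∫ s in (0:ℝ)..D, (1 + s) ^ ρ ≤ (1 + D) ^ (ρ + 1) / (ρ + 1) := by
  have h0 : (0:ℝ) ∉ Set.uIcc (1:ℝ) (1 + D) := by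
    rw [Set.uIcc_of_le (by linarith)]
    intro h; exact absurd (Set.mem_Icc.1 h).1 (by norm_num)
  have : (∫ s in (0:ℝ)..D, (1 + s) ^ ρ) = ∫ x in (1:ℝ)..(1+D), x ^ ρ := by
    simpa using intervalIntegral.integral_comp_add_left (a := (0:ℝ)) (b := D)
      (fun x => x ^ ρ) 1
  rw [this, integral_rpow (Or.inl hρ)]
  have h1 : (0:ℝ) < ρ + 1 := by linarith
  have h2 : (1:ℝ) ≤ (1+D) ^ (ρ+1) := Real.one_le_rpow (by linarith) h1.le
  rw [Real.one_rpow, div_le_div_iff₀ h1 h1]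
  nlinarith

lemma intervalIntegrable_J {p q D : ℝ} {l r : ℝ} (hl : 0 ≤ l) (hr : r ≤ D) (hlr : l ≤ r) :
    IntervalIntegrable (fun s => (1 + s) ^ q * (1 + (D - s)) ^ p) volume l r := by
  apply ContinuousOn.intervalIntegrable
  rw [Set.uIcc_of_le hlr]
  apply ContinuousOn.mul
  · apply ContinuousOn.rpow_const
    · fun_prop
    · intro x hx
      left
      have := (Set.mem_Icc.1 hx).1
      intro h; nlinarith [h]
  · apply ContinuousOn.rpow_const
    · fun_prop
    · intro x hx
      left
      have := (Set.mem_Icc.1 hx).2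
      intro h; nlinarith [h]

lemma Jhalf {εa p q D : ℝ} (hε : 0 < εa) (hq : -1 - εa < q) (hD : 0 ≤ D) :
    ∫ s in (0:ℝ)..(D/2), (1 + s) ^ q * (1 + (D - s)) ^ p
      ≤ (2 ^ |p| / (q + 1 + εa)) * (1 + D) ^ (p + q + 1 + εa) := by
  have hq1 : (0:ℝ) < q + 1 + εa := by linarith
  have step1 : ∫ s in (0:ℝ)..(D/2), (1 + s) ^ q * (1 + (D - s)) ^ p
      ≤ ∫ s in (0:ℝ)..(D/2), (1 + s) ^ (q + εa) * (2 ^ |p| * (1 + D) ^ p) := by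
    apply intervalIntegral.integral_mono_on (by linarith)
      (intervalIntegrable_J (by norm_num) (by linarith) (by linarith))
    · apply IntervalIntegrable.mul_const
      apply ContinuousOn.intervalIntegrable
      apply ContinuousOn.rpow_const
      · fun_prop
      · intro x hx
        rw [Set.uIcc_of_le (by linarith)] at hx
        have := (Set.mem_Icc.1 hx).1
        left; intro h; nlinarith
    · intro x hx
      obtain ⟨hx0, hx1⟩ := Set.mem_Icc.1 hx
      have h1x : (1:ℝ) ≤ 1 + x := by linarith
      apply mul_le_mul
      · exact Real.rpow_le_rpow_of_exponent_le h1x (by linarith)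
      · -- (1 + (D - x)) ^ p ≤ 2 ^ |p| * (1 + D) ^ p
        apply rpow_ratio (by linarith) (by linarith) (by linarith) (by linarith)
      · exact Real.rpow_nonneg (by linarith) _
      · exact Real.rpow_nonneg (by linarith) _
  have step2 : ∫ s in (0:ℝ)..(D/2), (1 + s) ^ (q + εa) * (2 ^ |p| * (1 + D) ^ p)
      = (2 ^ |p| * (1 + D) ^ p) * ∫ s in (0:ℝ)..(D/2), (1 + s) ^ (q + εa) := by
    rw [intervalIntegral.integral_mul_const, mul_comm]
  have step3 : ∫ s in (0:ℝ)..(D/2), (1 + s) ^ (q + εa) ≤ (1 + D) ^ (q + 1 + εa) / (q + 1 + εa) := by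
    calc ∫ s in (0:ℝ)..(D/2), (1 + s) ^ (q + εa)
        ≤ (1 + D/2) ^ (q + εa + 1) / (q + εa + 1) := K1 (by linarith) (by linarith)
    _ ≤ (1 + D) ^ (q + 1 + εa) / (q + 1 + εa) := by
        rw [show q + εa + 1 = q + 1 + εa by ring]
        have hD2 : (1 + D/2) ^ (q+1+εa) ≤ (1 + D) ^ (q+1+εa) :=
          Real.rpow_le_rpow (by linarith) (by linarith) hq1.le
        exact (div_le_div_iff_of_pos_right hq1).mpr hD2
  have hc : (0:ℝ) ≤ 2 ^ |p| * (1 + D) ^ p := by positivity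
  calc ∫ s in (0:ℝ)..(D/2), (1 + s) ^ q * (1 + (D - s)) ^ p
      ≤ (2 ^ |p| * (1 + D) ^ p) * ∫ s in (0:ℝ)..(D/2), (1 + s) ^ (q + εa) := by
        rw [← step2]; exact step1
  _ ≤ (2 ^ |p| * (1 + D) ^ p) * ((1 + D) ^ (q + 1 + εa) / (q + 1 + εa)) :=
        mul_le_mul_of_nonneg_left step3 hc
  _ = (2 ^ |p| / (q + 1 + εa)) * (1 + D) ^ (p + q + 1 + εa) := by
        rw [rpow_split (show (0:ℝ) < 1 + D by linarith)
          (show p + q + 1 + εa = p + (q + 1 + εa) by ring)]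
        ring


lemma Jlem {εa p q D : ℝ} (hε : 0 < εa) (hp : -1 - εa < p) (hq : -1 - εa < q) (hD : 0 ≤ D) :
    ∫ s in (0:ℝ)..D, (1 + s) ^ q * (1 + (D - s)) ^ p
      ≤ (2 ^ |p| / (q + 1 + εa) + 2 ^ |q| / (p + 1 + εa)) * (1 + D) ^ (p + q + 1 + εa) := by
  have i1 : IntervalIntegrable (fun s => (1 + s) ^ q * (1 + (D - s)) ^ p) volume 0 (D/2) :=
    intervalIntegrable_J (le_refl 0) (by linarith) (by linarith)
  have i2 : IntervalIntegrable (fun s => (1 + s) ^ q * (1 + (D - s)) ^ p) volume (D/2) D :=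
    intervalIntegrable_J (by linarith) (le_refl D) (by linarith)
  have hsplit : (∫ s in (0:ℝ)..D, (1 + s) ^ q * (1 + (D - s)) ^ p)
      = (∫ s in (0:ℝ)..(D/2), (1 + s) ^ q * (1 + (D - s)) ^ p)
        + ∫ s in (D/2)..D, (1 + s) ^ q * (1 + (D - s)) ^ p :=
    (intervalIntegral.integral_add_adjacent_intervals i1 i2).symm
  have h := intervalIntegral.integral_comp_sub_left (a := (0:ℝ)) (b := D/2)
    (fun s => (1 + s) ^ q * (1 + (D - s)) ^ p) D
  simp only [sub_sub_cancel, sub_zero] at h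
  rw [show D - D/2 = D/2 by ring] at h
  have hfun : (fun x : ℝ => (1 + (D - x)) ^ q * (1 + x) ^ p)
      = fun x : ℝ => (1 + x) ^ p * (1 + (D - x)) ^ q := by funext x; ring
  rw [hfun] at h
  have part1 := Jhalf (p := p) (q := q) hε hq hD
  have part2 : (∫ s in (D/2)..D, (1 + s) ^ q * (1 + (D - s)) ^ p)
      ≤ (2 ^ |q| / (p + 1 + εa)) * (1 + D) ^ (p + q + 1 + εa) := by
    rw [← h]
    calc (∫ s in (0:ℝ)..(D/2), (1 + s) ^ p * (1 + (D - s)) ^ q)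
        ≤ (2 ^ |q| / (p + 1 + εa)) * (1 + D) ^ (q + p + 1 + εa) := Jhalf hε hp hD
    _ = (2 ^ |q| / (p + 1 + εa)) * (1 + D) ^ (p + q + 1 + εa) := by
        rw [show q + p + 1 + εa = p + q + 1 + εa by ring]
  rw [hsplit]
  calc (∫ s in (0:ℝ)..(D/2), (1 + s) ^ q * (1 + (D - s)) ^ p)
        + (∫ s in (D/2)..D, (1 + s) ^ q * (1 + (D - s)) ^ p)
      ≤ (2 ^ |p| / (q + 1 + εa)) * (1 + D) ^ (p + q + 1 + εa)
        + (2 ^ |q| / (p + 1 + εa)) * (1 + D) ^ (p + q + 1 + εa) := add_le_add part1 part2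
  _ = (2 ^ |p| / (q + 1 + εa) + 2 ^ |q| / (p + 1 + εa)) * (1 + D) ^ (p + q + 1 + εa) := by ring

lemma exp_transfer {Z X E₁ E₂ T₁ T₂ : ℝ} (h1 : 1 ≤ Z) (hZX : Z ≤ X)
    (hE2 : E₂ ≤ T₂) (hsum : E₁ + E₂ ≤ T₁ + T₂) :
    Z ^ E₁ * X ^ E₂ ≤ Z ^ T₁ * X ^ T₂ := by
  have hX : 1 ≤ X := le_trans h1 hZX
  have hZ0 : (0:ℝ) < Z := by linarith
  have hX0 : (0:ℝ) < X := by linarith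
  rcases le_or_gt E₁ T₁ with hE1 | hE1
  · apply mul_le_mul (Real.rpow_le_rpow_of_exponent_le h1 hE1)
      (Real.rpow_le_rpow_of_exponent_le hX hE2)
      (Real.rpow_nonneg hX0.le _) (Real.rpow_nonneg hZ0.le _)
  · have key : Z ^ E₁ ≤ Z ^ T₁ * X ^ (E₁ - T₁) := by
      rw [rpow_split hZ0 (show E₁ = T₁ + (E₁ - T₁) by ring)]
      apply mul_le_mul_of_nonneg_left _ (Real.rpow_nonneg hZ0.le _)
      exact Real.rpow_le_rpow hZ0.le hZX (by linarith)
    calc Z ^ E₁ * X ^ E₂ ≤ (Z ^ T₁ * X ^ (E₁ - T₁)) * X ^ E₂ :=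
        mul_le_mul_of_nonneg_right key (Real.rpow_nonneg hX0.le _)
    _ = Z ^ T₁ * X ^ (E₁ - T₁ + E₂) := by
        rw [rpow_split hX0 (show E₁ - T₁ + E₂ = (E₁ - T₁) + E₂ by ring)]; ring
    _ ≤ Z ^ T₁ * X ^ T₂ := by
        apply mul_le_mul_of_nonneg_left
          (Real.rpow_le_rpow_of_exponent_le hX (by linarith)) (Real.rpow_nonneg hZ0.le _)


/-- the basic one-dimensional profile -/
def g (α β p q : ℝ) : ℝ → ℝ := fun u => (1 + (u - α)) ^ p * (1 + (β - u)) ^ q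

lemma g_intble {α β : ℝ} (p q : ℝ) (hαβ : α ≤ β) :
    IntervalIntegrable (g α β p q) volume α β := by
  apply ContinuousOn.intervalIntegrable
  rw [Set.uIcc_of_le hαβ]
  apply ContinuousOn.mul
  · apply ContinuousOn.rpow_const
    · fun_prop
    · intro x hx
      have := (Set.mem_Icc.1 hx).1
      left; intro h; nlinarith
  · apply ContinuousOn.rpow_const
    · fun_prop
    · intro x hx
      have := (Set.mem_Icc.1 hx).2
      left; intro h; nlinarith

lemma g_nonneg {α β p q : ℝ} (hαβ : α ≤ β) : 0 ≤ ∫ u in α..β, g α β p q u := by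
  apply intervalIntegral.integral_nonneg hαβ
  intro u hu
  obtain ⟨h1, h2⟩ := Set.mem_Icc.1 hu
  apply mul_nonneg (Real.rpow_nonneg (by linarith) _) (Real.rpow_nonneg (by linarith) _)

lemma g_int_le {εa α β p q : ℝ} (hε : 0 < εa) (hp : -1 - εa < p) (hq : -1 - εa < q)
    (hαβ : α ≤ β) :
    (∫ u in α..β, g α β p q u) ≤
      (2 ^ |q| / (p + 1 + εa) + 2 ^ |p| / (q + 1 + εa)) * (1 + (β - α)) ^ (p + q + 1 + εa) := by
  have hshift := intervalIntegral.integral_comp_add_left (a := (0:ℝ)) (b := β - α)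
    (g α β p q) α
  rw [add_zero, show α + (β - α) = β by ring] at hshift
  have hfun : (fun s => g α β p q (α + s))
      = fun s => (1 + s) ^ p * (1 + ((β - α) - s)) ^ q := by
    funext s
    simp only [g]
    rw [show α + s - α = s by ring, show β - (α + s) = (β - α) - s by ring]
  rw [hfun] at hshift
  rw [← hshift]
  calc (∫ s in (0:ℝ)..(β - α), (1 + s) ^ p * (1 + ((β - α) - s)) ^ q)
      ≤ (2 ^ |q| / (p + 1 + εa) + 2 ^ |p| / (q + 1 + εa)) * (1 + (β - α)) ^ (q + p + 1 + εa) :=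
        Jlem hε hq hp (by linarith)
  _ = (2 ^ |q| / (p + 1 + εa) + 2 ^ |p| / (q + 1 + εa)) * (1 + (β - α)) ^ (p + q + 1 + εa) := by
        rw [show q + p + 1 + εa = p + q + 1 + εa by ring]

lemma cont_abs_rpow {α : Type*} [TopologicalSpace α] {f : α → ℝ} (hf : Continuous f) (e : ℝ) :
    Continuous fun p => ‖1 + Complex.I * (f p : ℂ)‖ ^ e := by
  apply Continuous.rpow_const
  · exact continuous_norm.comp (by continuity)
  · intro x; left
    rw [abs_eq]
    have := one_le_sqrt (f x)
    intro h; rw [h] at this; norm_num at this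

lemma ptwise_total (a₁ a₂ a₃ b₁ b₂ b₃ c px1 py1 p11 p21 K1 px2 py2 p12 p22 K2 : ℝ)
    {x y d₁ d₂ : ℝ} (hx : 0 ≤ x) (hxd : x ≤ d₁) (hy : 0 ≤ y) (hyd : y ≤ d₂) (hdd : d₁ ≤ d₂)
    (hK1 : 0 ≤ K1) (hK2 : 0 ≤ K2)
    (hHF : (1+(x+y))^c * (1+(y+d₁))^b₁ ≤
        K1 * ((1+x)^px1 * (1+y)^py1 * (1+d₁)^p11 * (1+d₂)^p21)
        + K2 * ((1+x)^px2 * (1+y)^py2 * (1+d₁)^p12 * (1+d₂)^p22)) :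
    Real.sqrt (1+(x+y)^2)^c *
      (Real.sqrt (1+(d₁-x)^2)^a₁ * Real.sqrt (1+x^2)^a₂ * Real.sqrt (1+(d₂+x)^2)^a₃) *
      (Real.sqrt (1+(y+d₁)^2)^b₁ * Real.sqrt (1+y^2)^b₂ * Real.sqrt (1+(d₂-y)^2)^b₃)
    ≤ (2^|a₁| * 2^|a₂| * 2^|a₃| * 2^|b₁| * 2^|b₂| * 2^|b₃| * 2^|c|) *
      (K1 * ((1+(d₁-x))^a₁ * (1+x)^(a₂+px1)) * ((1+y)^(b₂+py1) * (1+(d₂-y))^b₃)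
          * ((1+d₁)^p11 * (1+d₂)^(a₃+p21))
       + K2 * ((1+(d₁-x))^a₁ * (1+x)^(a₂+px2)) * ((1+y)^(b₂+py2) * (1+(d₂-y))^b₃)
          * ((1+d₁)^p12 * (1+d₂)^(a₃+p22))) := by
  have hx1 : (0:ℝ) ≤ 1 + x := by linarith
  have hy1 : (0:ℝ) ≤ 1 + y := by linarith
  have hdx : (0:ℝ) ≤ 1 + (d₁ - x) := by linarith
  have hdy : (0:ℝ) ≤ 1 + (d₂ - y) := by linarith
  have hd₂0 : (0:ℝ) < 1 + d₂ := by linarith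
  have hd₁0 : (0:ℝ) < 1 + d₁ := by linarith
  -- factor bounds
  have f0 : Real.sqrt (1+(x+y)^2)^c ≤ 2^|c| * (1+(x+y))^c := w_pow_le (by linarith) c
  have f1 : Real.sqrt (1+(d₁-x)^2)^a₁ ≤ 2^|a₁| * (1+(d₁-x))^a₁ := w_pow_le (by linarith) a₁
  have f2 : Real.sqrt (1+x^2)^a₂ ≤ 2^|a₂| * (1+x)^a₂ := w_pow_le hx a₂
  have f3 : Real.sqrt (1+(d₂+x)^2)^a₃ ≤ 2^|a₃| * (1+d₂)^a₃ := by
    have h1 : 1 + (d₂+x) ≤ 2 * Real.sqrt (1+(d₂+x)^2) := one_add_le_two_sqrt (by linarith)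
    have h2 : Real.sqrt (1+(d₂+x)^2) ≤ 1 + (d₂+x) := sqrt_le_one_add (by linarith)
    exact rpow_ratio hd₂0 (sqrt_pos' _) (by linarith) (by linarith) a₃
  have f4 : Real.sqrt (1+(y+d₁)^2)^b₁ ≤ 2^|b₁| * (1+(y+d₁))^b₁ := w_pow_le (by linarith) b₁
  have f5 : Real.sqrt (1+y^2)^b₂ ≤ 2^|b₂| * (1+y)^b₂ := w_pow_le hy b₂
  have f6 : Real.sqrt (1+(d₂-y)^2)^b₃ ≤ 2^|b₃| * (1+(d₂-y))^b₃ := w_pow_le (by linarith) b₃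
  -- nonnegativity of rhs factors
  have n0 : (0:ℝ) ≤ 2^|c| * (1+(x+y))^c := by
    exact mul_nonneg (by positivity) (Real.rpow_nonneg (by linarith) _)
  have n1 : (0:ℝ) ≤ 2^|a₁| * (1+(d₁-x))^a₁ :=
    mul_nonneg (by positivity) (Real.rpow_nonneg hdx _)
  have n2 : (0:ℝ) ≤ 2^|a₂| * (1+x)^a₂ := mul_nonneg (by positivity) (Real.rpow_nonneg hx1 _)
  have n3 : (0:ℝ) ≤ 2^|a₃| * (1+d₂)^a₃ :=
    mul_nonneg (by positivity) (Real.rpow_nonneg hd₂0.le _)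
  have n4 : (0:ℝ) ≤ 2^|b₁| * (1+(y+d₁))^b₁ :=
    mul_nonneg (by positivity) (Real.rpow_nonneg (by linarith) _)
  have n5 : (0:ℝ) ≤ 2^|b₂| * (1+y)^b₂ := mul_nonneg (by positivity) (Real.rpow_nonneg hy1 _)
  have step1 : Real.sqrt (1+(x+y)^2)^c *
      (Real.sqrt (1+(d₁-x)^2)^a₁ * Real.sqrt (1+x^2)^a₂ * Real.sqrt (1+(d₂+x)^2)^a₃) *
      (Real.sqrt (1+(y+d₁)^2)^b₁ * Real.sqrt (1+y^2)^b₂ * Real.sqrt (1+(d₂-y)^2)^b₃)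
      ≤ (2^|c| * (1+(x+y))^c) *
        ((2^|a₁| * (1+(d₁-x))^a₁) * (2^|a₂| * (1+x)^a₂) * (2^|a₃| * (1+d₂)^a₃)) *
        ((2^|b₁| * (1+(y+d₁))^b₁) * (2^|b₂| * (1+y)^b₂) * (2^|b₃| * (1+(d₂-y))^b₃)) := by
    apply mul_le_mul
    · apply mul_le_mul f0
      · exact mul_le_mul (mul_le_mul f1 f2 (by positivity) n1) f3 (by positivity)
          (mul_nonneg n1 n2)
      · positivity
      · exact n0
    · exact mul_le_mul (mul_le_mul f4 f5 (by positivity) n4) f6 (by positivity)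
        (mul_nonneg n4 n5)
    · positivity
    · exact mul_nonneg n0 (mul_nonneg (mul_nonneg n1 n2) n3)
  have hP : (0:ℝ) ≤ (2^|a₁| * 2^|a₂| * 2^|a₃| * 2^|b₁| * 2^|b₂| * 2^|b₃| * 2^|c|) *
      (((1+(d₁-x))^a₁ * (1+x)^a₂) * ((1+y)^b₂ * (1+(d₂-y))^b₃) * (1+d₂)^a₃) := by
    apply mul_nonneg (by positivity)
    exact mul_nonneg (mul_nonneg (mul_nonneg (Real.rpow_nonneg hdx _) (Real.rpow_nonneg hx1 _))
      (mul_nonneg (Real.rpow_nonneg hy1 _) (Real.rpow_nonneg hdy _)))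
      (Real.rpow_nonneg hd₂0.le _)
  calc Real.sqrt (1+(x+y)^2)^c *
      (Real.sqrt (1+(d₁-x)^2)^a₁ * Real.sqrt (1+x^2)^a₂ * Real.sqrt (1+(d₂+x)^2)^a₃) *
      (Real.sqrt (1+(y+d₁)^2)^b₁ * Real.sqrt (1+y^2)^b₂ * Real.sqrt (1+(d₂-y)^2)^b₃)
      ≤ (2^|c| * (1+(x+y))^c) *
        ((2^|a₁| * (1+(d₁-x))^a₁) * (2^|a₂| * (1+x)^a₂) * (2^|a₃| * (1+d₂)^a₃)) *
        ((2^|b₁| * (1+(y+d₁))^b₁) * (2^|b₂| * (1+y)^b₂) * (2^|b₃| * (1+(d₂-y))^b₃)) := step1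
  _ = ((2^|a₁| * 2^|a₂| * 2^|a₃| * 2^|b₁| * 2^|b₂| * 2^|b₃| * 2^|c|) *
        (((1+(d₁-x))^a₁ * (1+x)^a₂) * ((1+y)^b₂ * (1+(d₂-y))^b₃) * (1+d₂)^a₃)) *
      ((1+(x+y))^c * (1+(y+d₁))^b₁) := by ring
  _ ≤ ((2^|a₁| * 2^|a₂| * 2^|a₃| * 2^|b₁| * 2^|b₂| * 2^|b₃| * 2^|c|) *
        (((1+(d₁-x))^a₁ * (1+x)^a₂) * ((1+y)^b₂ * (1+(d₂-y))^b₃) * (1+d₂)^a₃)) *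
      (K1 * ((1+x)^px1 * (1+y)^py1 * (1+d₁)^p11 * (1+d₂)^p21)
        + K2 * ((1+x)^px2 * (1+y)^py2 * (1+d₁)^p12 * (1+d₂)^p22)) :=
      mul_le_mul_of_nonneg_left hHF hP
  _ = (2^|a₁| * 2^|a₂| * 2^|a₃| * 2^|b₁| * 2^|b₂| * 2^|b₃| * 2^|c|) *
      (K1 * ((1+(d₁-x))^a₁ * (1+x)^(a₂+px1)) * ((1+y)^(b₂+py1) * (1+(d₂-y))^b₃)
          * ((1+d₁)^p11 * (1+d₂)^(a₃+p21))
       + K2 * ((1+(d₁-x))^a₁ * (1+x)^(a₂+px2)) * ((1+y)^(b₂+py2) * (1+(d₂-y))^b₃)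
          * ((1+d₁)^p12 * (1+d₂)^(a₃+p22))) := by
      rw [rpow_split (show (0:ℝ) < 1+x by linarith) (show a₂+px1 = a₂ + px1 from rfl),
        rpow_split (show (0:ℝ) < 1+x by linarith) (show a₂+px2 = a₂ + px2 from rfl),
        rpow_split (show (0:ℝ) < 1+y by linarith) (show b₂+py1 = b₂ + py1 from rfl),
        rpow_split (show (0:ℝ) < 1+y by linarith) (show b₂+py2 = b₂ + py2 from rfl),
        rpow_split hd₂0 (show a₃+p21 = a₃ + p21 from rfl),
        rpow_split hd₂0 (show a₃+p22 = a₃ + p22 from rfl)]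
      ring


set_option maxHeartbeats 2000000 in
lemma main_of_data (ε a₁ a₂ a₃ b₁ b₂ b₃ c px1 py1 p11 p21 K1 px2 py2 p12 p22 K2 : ℝ)
    (hε : 0 < ε) (ha₁ : -1 - ε < a₁) (hb₃ : -1 - ε < b₃)
    (hK1 : 0 ≤ K1) (hK2 : 0 ≤ K2)
    (hq11 : -1 - ε < a₂ + px1) (hq21 : -1 - ε < b₂ + py1)
    (hq12 : -1 - ε < a₂ + px2) (hq22 : -1 - ε < b₂ + py2)
    (hC11 : py1 + p21 ≤ max (b₁ + c) 0) (hC21 : px1 + py1 + p11 + p21 ≤ b₁ + c)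
    (hC12 : py2 + p22 ≤ max (b₁ + c) 0) (hC22 : px2 + py2 + p12 + p22 ≤ b₁ + c)
    (hHF : ∀ x y d₁ d₂ : ℝ, 0 ≤ x → x ≤ d₁ → 0 ≤ y → y ≤ d₂ → d₁ ≤ d₂ →
      (1+(x+y))^c * (1+(y+d₁))^b₁ ≤
        K1 * ((1+x)^px1 * (1+y)^py1 * (1+d₁)^p11 * (1+d₂)^p21)
        + K2 * ((1+x)^px2 * (1+y)^py2 * (1+d₁)^p12 * (1+d₂)^p22)) :
    ∃ C : ℝ, ∀ v₁ v₂ v₃ : ℝ, v₁ < v₂ → v₂ < v₃ → v₂ - v₁ < v₃ - v₂ →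
      (∫ u₁ in v₁..v₂, ∫ u₂ in v₂..v₃,
          ‖1 + Complex.I * ((u₁ - u₂ : ℝ) : ℂ)‖ ^ c *
            (‖1 + Complex.I * ((u₁ - v₁ : ℝ) : ℂ)‖ ^ a₁ *
              ‖1 + Complex.I * ((u₁ - v₂ : ℝ) : ℂ)‖ ^ a₂ *
              ‖1 + Complex.I * ((u₁ - v₃ : ℝ) : ℂ)‖ ^ a₃) *
            (‖1 + Complex.I * ((u₂ - v₁ : ℝ) : ℂ)‖ ^ b₁ *
              ‖1 + Complex.I * ((u₂ - v₂ : ℝ) : ℂ)‖ ^ b₂ *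
              ‖1 + Complex.I * ((u₂ - v₃ : ℝ) : ℂ)‖ ^ b₃)) ≤
        C * ‖1 + Complex.I * ((v₃ - v₁ : ℝ) : ℂ)‖ ^
              ((a₁ + a₂ + a₃ + b₁ + b₂ + b₃ + c + 2 -
                  min (a₁ + a₂ + 1) (a₁ + a₂ + b₁ + c + 1)) / 2 + ε) *
            ‖1 + Complex.I * ((v₃ - v₂ : ℝ) : ℂ)‖ ^
              ((a₁ + a₂ + a₃ + b₁ + b₂ + b₃ + c + 2 -
                  min (a₁ + a₂ + 1) (a₁ + a₂ + b₁ + c + 1)) / 2 + ε) *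
            ‖1 + Complex.I * ((v₂ - v₁ : ℝ) : ℂ)‖ ^
              (min (a₁ + a₂ + 1) (a₁ + a₂ + b₁ + c + 1) + ε) := by
  set δ := min (a₁ + a₂ + 1) (a₁ + a₂ + b₁ + c + 1) with hδ
  set τ := (a₁ + a₂ + a₃ + b₁ + b₂ + b₃ + c + 2 - δ) / 2 + ε with hτ
  set W7 := (2:ℝ)^|a₁| * 2^|a₂| * 2^|a₃| * 2^|b₁| * 2^|b₂| * 2^|b₃| * 2^|c| with hW7
  set CJ11 := (2:ℝ)^|a₂+px1| / (a₁+1+ε) + 2^|a₁| / ((a₂+px1)+1+ε) with hCJ11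
  set CJ12 := (2:ℝ)^|a₂+px2| / (a₁+1+ε) + 2^|a₁| / ((a₂+px2)+1+ε) with hCJ12
  set CJ21 := (2:ℝ)^|b₃| / ((b₂+py1)+1+ε) + 2^|b₂+py1| / (b₃+1+ε) with hCJ21
  set CJ22 := (2:ℝ)^|b₃| / ((b₂+py2)+1+ε) + 2^|b₂+py2| / (b₃+1+ε) with hCJ22
  set CT := (2:ℝ)^|δ+ε| * ((2:ℝ)^|τ| * (2:ℝ)^|τ|) with hCT
  have hW7pos : 0 < W7 := by rw [hW7]; positivity
  have hCJ11pos : 0 < CJ11 := by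
    rw [hCJ11]
    exact add_pos (div_pos (by positivity) (by linarith only [ha₁, hε]))
      (div_pos (by positivity) (by linarith only [hq11, hε]))
  have hCJ12pos : 0 < CJ12 := by
    rw [hCJ12]
    exact add_pos (div_pos (by positivity) (by linarith only [ha₁, hε]))
      (div_pos (by positivity) (by linarith only [hq12, hε]))
  have hCJ21pos : 0 < CJ21 := by
    rw [hCJ21]
    exact add_pos (div_pos (by positivity) (by linarith only [hq21, hε]))
      (div_pos (by positivity) (by linarith only [hb₃, hε]))
  have hCJ22pos : 0 < CJ22 := by
    rw [hCJ22]
    exact add_pos (div_pos (by positivity) (by linarith only [hq22, hε]))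
      (div_pos (by positivity) (by linarith only [hb₃, hε]))
  have hCTpos : 0 < CT := by rw [hCT]; positivity
  refine ⟨W7 * (K1 * CJ11 * CJ21 + K2 * CJ12 * CJ22) * CT, ?_⟩
  intro v₁ v₂ v₃ h12 h23 hgap
  set d₁ := v₂ - v₁ with hd₁
  set d₂ := v₃ - v₂ with hd₂
  have hd₁0 : 0 < d₁ := by rw [hd₁]; linarith only [h12]
  have hd₂0 : 0 < d₂ := by rw [hd₂]; linarith only [h23, h12, hgap]
  have hdd : d₁ ≤ d₂ := le_of_lt hgap
  -- numeric exponent facts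
  have hδval : δ = a₁ + a₂ + 1 + min (b₁ + c) 0 := by
    rw [hδ]
    rcases le_total (b₁ + c) 0 with h | h
    · rw [min_eq_right (show a₁ + a₂ + b₁ + c + 1 ≤ a₁ + a₂ + 1 by linarith), min_eq_left h]
      ring
    · rw [min_eq_left (show a₁ + a₂ + 1 ≤ a₁ + a₂ + b₁ + c + 1 by linarith), min_eq_right h]
      ring
  have hminmax : max (b₁ + c) 0 = b₁ + c - min (b₁ + c) 0 := by
    rcases le_total (b₁ + c) 0 with h | h
    · rw [max_eq_right h, min_eq_left h]; ring
    · rw [max_eq_left h, min_eq_right h]; ring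
  -- the J bounds
  have hJ11 : (∫ u in v₁..v₂, g v₁ v₂ a₁ (a₂+px1) u)
      ≤ CJ11 * (1 + d₁) ^ (a₁ + (a₂+px1) + 1 + ε) := by
    have := g_int_le hε ha₁ hq11 (le_of_lt h12)
    rw [← hd₁] at this; exact this
  have hJ12 : (∫ u in v₁..v₂, g v₁ v₂ a₁ (a₂+px2) u)
      ≤ CJ12 * (1 + d₁) ^ (a₁ + (a₂+px2) + 1 + ε) := by
    have := g_int_le hε ha₁ hq12 (le_of_lt h12)
    rw [← hd₁] at this; exact this
  have hJ21 : (∫ u in v₂..v₃, g v₂ v₃ (b₂+py1) b₃ u)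
      ≤ CJ21 * (1 + d₂) ^ ((b₂+py1) + b₃ + 1 + ε) := by
    have := g_int_le hε hq21 hb₃ (le_of_lt h23)
    rw [← hd₂] at this; exact this
  have hJ22 : (∫ u in v₂..v₃, g v₂ v₃ (b₂+py2) b₃ u)
      ≤ CJ22 * (1 + d₂) ^ ((b₂+py2) + b₃ + 1 + ε) := by
    have := g_int_le hε hq22 hb₃ (le_of_lt h23)
    rw [← hd₂] at this; exact this
  have hJ11n : 0 ≤ ∫ u in v₁..v₂, g v₁ v₂ a₁ (a₂+px1) u := g_nonneg (le_of_lt h12)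
  have hJ12n : 0 ≤ ∫ u in v₁..v₂, g v₁ v₂ a₁ (a₂+px2) u := g_nonneg (le_of_lt h12)
  have hJ21n : 0 ≤ ∫ u in v₂..v₃, g v₂ v₃ (b₂+py1) b₃ u := g_nonneg (le_of_lt h23)
  have hJ22n : 0 ≤ ∫ u in v₂..v₃, g v₂ v₃ (b₂+py2) b₃ u := g_nonneg (le_of_lt h23)
  have h1d₁ : (1:ℝ) ≤ 1 + d₁ := by linarith only [hd₁0]
  have h1dd : (1:ℝ) + d₁ ≤ 1 + d₂ := by linarith only [hdd]
  have h1d₁0 : (0:ℝ) < 1 + d₁ := by linarith only [hd₁0]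
  have h1d₂0 : (0:ℝ) < 1 + d₂ := by linarith only [hd₁0, hdd]
  -- exponent transfer
  have htrans1 : (1+d₁) ^ (p11 + (a₁ + (a₂+px1) + 1 + ε))
        * (1+d₂) ^ ((a₃+p21) + ((b₂+py1) + b₃ + 1 + ε))
      ≤ (1+d₁) ^ (δ+ε) * (1+d₂) ^ (2*τ) := by
    apply exp_transfer h1d₁ h1dd
    · rw [hτ]; linarith only [hC11, hδval, hminmax, hε]
    · rw [hτ]; linarith only [hC21, hδval, hminmax, hε]
  have htrans2 : (1+d₁) ^ (p12 + (a₁ + (a₂+px2) + 1 + ε))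
        * (1+d₂) ^ ((a₃+p22) + ((b₂+py2) + b₃ + 1 + ε))
      ≤ (1+d₁) ^ (δ+ε) * (1+d₂) ^ (2*τ) := by
    apply exp_transfer h1d₁ h1dd
    · rw [hτ]; linarith only [hC12, hδval, hminmax, hε]
    · rw [hτ]; linarith only [hC22, hδval, hminmax, hε]
  -- conversion to the sqrt-form target
  have htarget : (1+d₁) ^ (δ+ε) * (1+d₂) ^ (2*τ)
      ≤ CT * (Real.sqrt (1+d₁^2) ^ (δ+ε)
          * (Real.sqrt (1+d₂^2) ^ τ * Real.sqrt (1+(d₁+d₂)^2) ^ τ)) := by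
    have t1 : (1+d₁) ^ (δ+ε) ≤ 2^|δ+ε| * Real.sqrt (1+d₁^2) ^ (δ+ε) :=
      one_add_pow_le hd₁0.le _
    have t2 : (1+d₂) ^ τ ≤ 2^|τ| * Real.sqrt (1+d₂^2) ^ τ := one_add_pow_le hd₂0.le _
    have t3 : (1+d₂) ^ τ ≤ 2^|τ| * Real.sqrt (1+(d₁+d₂)^2) ^ τ := by
      have s1 := sqrt_le_one_add (show (0:ℝ) ≤ d₁+d₂ by linarith only [hd₁0, hd₂0])
      have hsq : (1:ℝ)+d₂^2 ≤ 1+(d₁+d₂)^2 := by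
        linarith only [sq_nonneg d₁, mul_nonneg hd₁0.le hd₂0.le]
      have s2 : Real.sqrt (1+d₂^2) ≤ Real.sqrt (1+(d₁+d₂)^2) := Real.sqrt_le_sqrt hsq
      have s3 := one_add_le_two_sqrt hd₂0.le
      exact rpow_ratio (sqrt_pos' _) h1d₂0 (by linarith only [s1, hdd, hd₂0])
        (by linarith only [s2, s3]) τ
    have e2 : (1+d₂) ^ (2*τ) = (1+d₂)^τ * (1+d₂)^τ :=
      rpow_split h1d₂0 (by ring)
    calc (1+d₁)^(δ+ε) * (1+d₂)^(2*τ) = (1+d₁)^(δ+ε) * ((1+d₂)^τ * (1+d₂)^τ) := by rw [e2]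
    _ ≤ (2^|δ+ε| * Real.sqrt (1+d₁^2)^(δ+ε))
        * ((2^|τ| * Real.sqrt (1+d₂^2)^τ) * (2^|τ| * Real.sqrt (1+(d₁+d₂)^2)^τ)) := by
        apply mul_le_mul t1
          (mul_le_mul t2 t3 (Real.rpow_nonneg h1d₂0.le τ) (by positivity))
          (mul_nonneg (Real.rpow_nonneg h1d₂0.le τ) (Real.rpow_nonneg h1d₂0.le τ))
          (by positivity)
    _ = CT * (Real.sqrt (1+d₁^2) ^ (δ+ε)
          * (Real.sqrt (1+d₂^2) ^ τ * Real.sqrt (1+(d₁+d₂)^2) ^ τ)) := by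
        rw [hCT]; ring
  -- continuity of the integrand
  have hFcont : Continuous (Function.uncurry (fun u₁ u₂ : ℝ =>
      ‖1 + Complex.I * ((u₁ - u₂ : ℝ) : ℂ)‖ ^ c *
        (‖1 + Complex.I * ((u₁ - v₁ : ℝ) : ℂ)‖ ^ a₁ *
          ‖1 + Complex.I * ((u₁ - v₂ : ℝ) : ℂ)‖ ^ a₂ *
          ‖1 + Complex.I * ((u₁ - v₃ : ℝ) : ℂ)‖ ^ a₃) *
        (‖1 + Complex.I * ((u₂ - v₁ : ℝ) : ℂ)‖ ^ b₁ *
          ‖1 + Complex.I * ((u₂ - v₂ : ℝ) : ℂ)‖ ^ b₂ *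
          ‖1 + Complex.I * ((u₂ - v₃ : ℝ) : ℂ)‖ ^ b₃))) := by
    show Continuous fun p : ℝ × ℝ =>
      ‖1 + Complex.I * ((p.1 - p.2 : ℝ) : ℂ)‖ ^ c *
        (‖1 + Complex.I * ((p.1 - v₁ : ℝ) : ℂ)‖ ^ a₁ *
          ‖1 + Complex.I * ((p.1 - v₂ : ℝ) : ℂ)‖ ^ a₂ *
          ‖1 + Complex.I * ((p.1 - v₃ : ℝ) : ℂ)‖ ^ a₃) *
        (‖1 + Complex.I * ((p.2 - v₁ : ℝ) : ℂ)‖ ^ b₁ *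
          ‖1 + Complex.I * ((p.2 - v₂ : ℝ) : ℂ)‖ ^ b₂ *
          ‖1 + Complex.I * ((p.2 - v₃ : ℝ) : ℂ)‖ ^ b₃)
    exact ((cont_abs_rpow (by fun_prop) c).mul
        (((cont_abs_rpow (by fun_prop) a₁).mul (cont_abs_rpow (by fun_prop) a₂)).mul
          (cont_abs_rpow (by fun_prop) a₃))).mul
      (((cont_abs_rpow (by fun_prop) b₁).mul (cont_abs_rpow (by fun_prop) b₂)).mul
        (cont_abs_rpow (by fun_prop) b₃))
  have hinner_cont : Continuous fun u₁ => ∫ u₂ in v₂..v₃,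
      ‖1 + Complex.I * ((u₁ - u₂ : ℝ) : ℂ)‖ ^ c *
        (‖1 + Complex.I * ((u₁ - v₁ : ℝ) : ℂ)‖ ^ a₁ *
          ‖1 + Complex.I * ((u₁ - v₂ : ℝ) : ℂ)‖ ^ a₂ *
          ‖1 + Complex.I * ((u₁ - v₃ : ℝ) : ℂ)‖ ^ a₃) *
        (‖1 + Complex.I * ((u₂ - v₁ : ℝ) : ℂ)‖ ^ b₁ *
          ‖1 + Complex.I * ((u₂ - v₂ : ℝ) : ℂ)‖ ^ b₂ *
          ‖1 + Complex.I * ((u₂ - v₃ : ℝ) : ℂ)‖ ^ b₃) :=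
    intervalIntegral.continuous_parametric_intervalIntegral_of_continuous' hFcont v₂ v₃
  -- the inner bound
  have hmono1 : ∀ u₁ ∈ Set.Icc v₁ v₂,
      (∫ u₂ in v₂..v₃,
        ‖1 + Complex.I * ((u₁ - u₂ : ℝ) : ℂ)‖ ^ c *
          (‖1 + Complex.I * ((u₁ - v₁ : ℝ) : ℂ)‖ ^ a₁ *
            ‖1 + Complex.I * ((u₁ - v₂ : ℝ) : ℂ)‖ ^ a₂ *
            ‖1 + Complex.I * ((u₁ - v₃ : ℝ) : ℂ)‖ ^ a₃) *
          (‖1 + Complex.I * ((u₂ - v₁ : ℝ) : ℂ)‖ ^ b₁ *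
            ‖1 + Complex.I * ((u₂ - v₂ : ℝ) : ℂ)‖ ^ b₂ *
            ‖1 + Complex.I * ((u₂ - v₃ : ℝ) : ℂ)‖ ^ b₃))
      ≤ (W7*(K1*((1+d₁)^p11*(1+d₂)^(a₃+p21)))*(∫ u in v₂..v₃, g v₂ v₃ (b₂+py1) b₃ u))
          * g v₁ v₂ a₁ (a₂+px1) u₁
        + (W7*(K2*((1+d₁)^p12*(1+d₂)^(a₃+p22)))*(∫ u in v₂..v₃, g v₂ v₃ (b₂+py2) b₃ u))
          * g v₁ v₂ a₁ (a₂+px2) u₁ := by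
    intro u₁ hu₁
    obtain ⟨hu₁l, hu₁r⟩ := Set.mem_Icc.1 hu₁
    have hint1 : IntervalIntegrable (fun u₂ =>
        ‖1 + Complex.I * ((u₁ - u₂ : ℝ) : ℂ)‖ ^ c *
          (‖1 + Complex.I * ((u₁ - v₁ : ℝ) : ℂ)‖ ^ a₁ *
            ‖1 + Complex.I * ((u₁ - v₂ : ℝ) : ℂ)‖ ^ a₂ *
            ‖1 + Complex.I * ((u₁ - v₃ : ℝ) : ℂ)‖ ^ a₃) *
          (‖1 + Complex.I * ((u₂ - v₁ : ℝ) : ℂ)‖ ^ b₁ *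
            ‖1 + Complex.I * ((u₂ - v₂ : ℝ) : ℂ)‖ ^ b₂ *
            ‖1 + Complex.I * ((u₂ - v₃ : ℝ) : ℂ)‖ ^ b₃)) volume v₂ v₃ := by
      apply Continuous.intervalIntegrable
      exact ((cont_abs_rpow (by fun_prop) c).mul
          (((cont_abs_rpow (by fun_prop) a₁).mul (cont_abs_rpow (by fun_prop) a₂)).mul
            (cont_abs_rpow (by fun_prop) a₃))).mul
        (((cont_abs_rpow (by fun_prop) b₁).mul (cont_abs_rpow (by fun_prop) b₂)).mul
          (cont_abs_rpow (by fun_prop) b₃))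
    have hx0 : (0:ℝ) ≤ v₂ - u₁ := by linarith only [hu₁r]
    have hxd : v₂ - u₁ ≤ d₁ := by rw [hd₁]; linarith only [hu₁l]
    calc (∫ u₂ in v₂..v₃,
        ‖1 + Complex.I * ((u₁ - u₂ : ℝ) : ℂ)‖ ^ c *
          (‖1 + Complex.I * ((u₁ - v₁ : ℝ) : ℂ)‖ ^ a₁ *
            ‖1 + Complex.I * ((u₁ - v₂ : ℝ) : ℂ)‖ ^ a₂ *
            ‖1 + Complex.I * ((u₁ - v₃ : ℝ) : ℂ)‖ ^ a₃) *
          (‖1 + Complex.I * ((u₂ - v₁ : ℝ) : ℂ)‖ ^ b₁ *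
            ‖1 + Complex.I * ((u₂ - v₂ : ℝ) : ℂ)‖ ^ b₂ *
            ‖1 + Complex.I * ((u₂ - v₃ : ℝ) : ℂ)‖ ^ b₃))
        ≤ ∫ u₂ in v₂..v₃,
          ((W7*(K1*((1+d₁)^p11*(1+d₂)^(a₃+p21)))*(g v₁ v₂ a₁ (a₂+px1) u₁))
              * g v₂ v₃ (b₂+py1) b₃ u₂
            + (W7*(K2*((1+d₁)^p12*(1+d₂)^(a₃+p22)))*(g v₁ v₂ a₁ (a₂+px2) u₁))
              * g v₂ v₃ (b₂+py2) b₃ u₂) := by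
          apply intervalIntegral.integral_mono_on (le_of_lt h23) hint1
            (((g_intble _ _ (le_of_lt h23)).const_mul _).add
              ((g_intble _ _ (le_of_lt h23)).const_mul _))
          intro u₂ hu₂
          obtain ⟨hu₂l, hu₂r⟩ := Set.mem_Icc.1 hu₂
          have hy0 : (0:ℝ) ≤ u₂ - v₂ := by linarith only [hu₂l]
          have hyd : u₂ - v₂ ≤ d₂ := by rw [hd₂]; linarith only [hu₂r]
          have H := ptwise_total a₁ a₂ a₃ b₁ b₂ b₃ c px1 py1 p11 p21 K1 px2 py2 p12 p22 K2
            hx0 hxd hy0 hyd hdd hK1 hK2 (hHF _ _ _ _ hx0 hxd hy0 hyd hdd)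
          have heq : (2:ℝ)^|a₁| * 2^|a₂| * 2^|a₃| * 2^|b₁| * 2^|b₂| * 2^|b₃| * 2^|c| *
              (K1 * ((1+(d₁-(v₂-u₁)))^a₁ * (1+(v₂-u₁))^(a₂+px1))
                  * ((1+(u₂-v₂))^(b₂+py1) * (1+(d₂-(u₂-v₂)))^b₃)
                  * ((1+d₁)^p11 * (1+d₂)^(a₃+p21))
               + K2 * ((1+(d₁-(v₂-u₁)))^a₁ * (1+(v₂-u₁))^(a₂+px2))
                  * ((1+(u₂-v₂))^(b₂+py2) * (1+(d₂-(u₂-v₂)))^b₃)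
                  * ((1+d₁)^p12 * (1+d₂)^(a₃+p22)))
              = (W7*(K1*((1+d₁)^p11*(1+d₂)^(a₃+p21)))*(g v₁ v₂ a₁ (a₂+px1) u₁))
                  * g v₂ v₃ (b₂+py1) b₃ u₂
                + (W7*(K2*((1+d₁)^p12*(1+d₂)^(a₃+p22)))*(g v₁ v₂ a₁ (a₂+px2) u₁))
                  * g v₂ v₃ (b₂+py2) b₃ u₂ := by
            simp only [g, hW7]
            rw [show d₁-(v₂-u₁) = u₁-v₁ by rw [hd₁]; ring,
              show d₂-(u₂-v₂) = v₃-u₂ by rw [hd₂]; ring]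
            ring
          rw [← heq]
          simp only [abs_eq]
          rw [show (u₁-u₂)^2 = ((v₂-u₁)+(u₂-v₂))^2 by ring,
            show (u₁-v₁)^2 = (d₁-(v₂-u₁))^2 by rw [hd₁]; ring,
            show (u₁-v₂)^2 = (v₂-u₁)^2 by ring,
            show (u₁-v₃)^2 = (d₂+(v₂-u₁))^2 by rw [hd₂]; ring,
            show (u₂-v₁)^2 = ((u₂-v₂)+d₁)^2 by rw [hd₁]; ring,
            show (u₂-v₃)^2 = (d₂-(u₂-v₂))^2 by rw [hd₂]; ring]
          exact H
    _ = (W7*(K1*((1+d₁)^p11*(1+d₂)^(a₃+p21)))*(∫ u in v₂..v₃, g v₂ v₃ (b₂+py1) b₃ u))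
          * g v₁ v₂ a₁ (a₂+px1) u₁
        + (W7*(K2*((1+d₁)^p12*(1+d₂)^(a₃+p22)))*(∫ u in v₂..v₃, g v₂ v₃ (b₂+py2) b₃ u))
          * g v₁ v₂ a₁ (a₂+px2) u₁ := by
          rw [intervalIntegral.integral_add ((g_intble _ _ (le_of_lt h23)).const_mul _)
            ((g_intble _ _ (le_of_lt h23)).const_mul _),
            intervalIntegral.integral_const_mul, intervalIntegral.integral_const_mul]
          ring
  -- assemble
  have key : (∫ u₁ in v₁..v₂, ∫ u₂ in v₂..v₃,
      ‖1 + Complex.I * ((u₁ - u₂ : ℝ) : ℂ)‖ ^ c *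
        (‖1 + Complex.I * ((u₁ - v₁ : ℝ) : ℂ)‖ ^ a₁ *
          ‖1 + Complex.I * ((u₁ - v₂ : ℝ) : ℂ)‖ ^ a₂ *
          ‖1 + Complex.I * ((u₁ - v₃ : ℝ) : ℂ)‖ ^ a₃) *
        (‖1 + Complex.I * ((u₂ - v₁ : ℝ) : ℂ)‖ ^ b₁ *
          ‖1 + Complex.I * ((u₂ - v₂ : ℝ) : ℂ)‖ ^ b₂ *
          ‖1 + Complex.I * ((u₂ - v₃ : ℝ) : ℂ)‖ ^ b₃))
      ≤ (W7*(K1*((1+d₁)^p11*(1+d₂)^(a₃+p21)))*(∫ u in v₂..v₃, g v₂ v₃ (b₂+py1) b₃ u))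
          * (∫ u in v₁..v₂, g v₁ v₂ a₁ (a₂+px1) u)
        + (W7*(K2*((1+d₁)^p12*(1+d₂)^(a₃+p22)))*(∫ u in v₂..v₃, g v₂ v₃ (b₂+py2) b₃ u))
          * (∫ u in v₁..v₂, g v₁ v₂ a₁ (a₂+px2) u) := by
    have step := intervalIntegral.integral_mono_on (le_of_lt h12)
      (hinner_cont.intervalIntegrable v₁ v₂)
      (((g_intble _ _ (le_of_lt h12)).const_mul _).add
        ((g_intble _ _ (le_of_lt h12)).const_mul _)) hmono1
    refine le_trans step (le_of_eq ?_)
    rw [intervalIntegral.integral_add ((g_intble _ _ (le_of_lt h12)).const_mul _)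
      ((g_intble _ _ (le_of_lt h12)).const_mul _),
      intervalIntegral.integral_const_mul, intervalIntegral.integral_const_mul]
  -- endgame
  have hM1n : (0:ℝ) ≤ W7*(K1*((1+d₁)^p11*(1+d₂)^(a₃+p21))) :=
    mul_nonneg hW7pos.le (mul_nonneg hK1 (mul_nonneg (Real.rpow_nonneg h1d₁0.le _)
      (Real.rpow_nonneg h1d₂0.le _)))
  have hM2n : (0:ℝ) ≤ W7*(K2*((1+d₁)^p12*(1+d₂)^(a₃+p22))) :=
    mul_nonneg hW7pos.le (mul_nonneg hK2 (mul_nonneg (Real.rpow_nonneg h1d₁0.le _)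
      (Real.rpow_nonneg h1d₂0.le _)))
  have hterm1 : (W7*(K1*((1+d₁)^p11*(1+d₂)^(a₃+p21)))*(∫ u in v₂..v₃, g v₂ v₃ (b₂+py1) b₃ u))
        * (∫ u in v₁..v₂, g v₁ v₂ a₁ (a₂+px1) u)
      ≤ (W7*(K1*CJ11*CJ21)*CT) * (Real.sqrt (1+d₁^2) ^ (δ+ε)
          * (Real.sqrt (1+d₂^2) ^ τ * Real.sqrt (1+(d₁+d₂)^2) ^ τ)) := by
    calc (W7*(K1*((1+d₁)^p11*(1+d₂)^(a₃+p21)))*(∫ u in v₂..v₃, g v₂ v₃ (b₂+py1) b₃ u))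
        * (∫ u in v₁..v₂, g v₁ v₂ a₁ (a₂+px1) u)
        ≤ (W7*(K1*((1+d₁)^p11*(1+d₂)^(a₃+p21)))*(CJ21 * (1+d₂) ^ ((b₂+py1)+b₃+1+ε)))
          * (CJ11 * (1+d₁) ^ (a₁+(a₂+px1)+1+ε)) := by
          apply mul_le_mul (mul_le_mul_of_nonneg_left hJ21 hM1n) hJ11 hJ11n
          exact mul_nonneg hM1n (mul_nonneg hCJ21pos.le (Real.rpow_nonneg h1d₂0.le _))
    _ = (W7*(K1*CJ11*CJ21))
        * ((1+d₁) ^ (p11+(a₁+(a₂+px1)+1+ε)) * (1+d₂) ^ ((a₃+p21)+((b₂+py1)+b₃+1+ε))) := by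
        rw [rpow_split h1d₁0 (show p11+(a₁+(a₂+px1)+1+ε) = p11 + (a₁+(a₂+px1)+1+ε) from rfl),
          rpow_split h1d₂0 (show (a₃+p21)+((b₂+py1)+b₃+1+ε)
            = (a₃+p21) + ((b₂+py1)+b₃+1+ε) from rfl)]
        ring
    _ ≤ (W7*(K1*CJ11*CJ21)) * ((1+d₁) ^ (δ+ε) * (1+d₂) ^ (2*τ)) := by
        apply mul_le_mul_of_nonneg_left htrans1
        exact mul_nonneg hW7pos.le (mul_nonneg (mul_nonneg hK1 hCJ11pos.le) hCJ21pos.le)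
    _ ≤ (W7*(K1*CJ11*CJ21)) * (CT * (Real.sqrt (1+d₁^2) ^ (δ+ε)
          * (Real.sqrt (1+d₂^2) ^ τ * Real.sqrt (1+(d₁+d₂)^2) ^ τ))) := by
        apply mul_le_mul_of_nonneg_left htarget
        exact mul_nonneg hW7pos.le (mul_nonneg (mul_nonneg hK1 hCJ11pos.le) hCJ21pos.le)
    _ = (W7*(K1*CJ11*CJ21)*CT) * (Real.sqrt (1+d₁^2) ^ (δ+ε)
          * (Real.sqrt (1+d₂^2) ^ τ * Real.sqrt (1+(d₁+d₂)^2) ^ τ)) := by ring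
  have hterm2 : (W7*(K2*((1+d₁)^p12*(1+d₂)^(a₃+p22)))*(∫ u in v₂..v₃, g v₂ v₃ (b₂+py2) b₃ u))
        * (∫ u in v₁..v₂, g v₁ v₂ a₁ (a₂+px2) u)
      ≤ (W7*(K2*CJ12*CJ22)*CT) * (Real.sqrt (1+d₁^2) ^ (δ+ε)
          * (Real.sqrt (1+d₂^2) ^ τ * Real.sqrt (1+(d₁+d₂)^2) ^ τ)) := by
    calc (W7*(K2*((1+d₁)^p12*(1+d₂)^(a₃+p22)))*(∫ u in v₂..v₃, g v₂ v₃ (b₂+py2) b₃ u))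
        * (∫ u in v₁..v₂, g v₁ v₂ a₁ (a₂+px2) u)
        ≤ (W7*(K2*((1+d₁)^p12*(1+d₂)^(a₃+p22)))*(CJ22 * (1+d₂) ^ ((b₂+py2)+b₃+1+ε)))
          * (CJ12 * (1+d₁) ^ (a₁+(a₂+px2)+1+ε)) := by
          apply mul_le_mul (mul_le_mul_of_nonneg_left hJ22 hM2n) hJ12 hJ12n
          exact mul_nonneg hM2n (mul_nonneg hCJ22pos.le (Real.rpow_nonneg h1d₂0.le _))
    _ = (W7*(K2*CJ12*CJ22))
        * ((1+d₁) ^ (p12+(a₁+(a₂+px2)+1+ε)) * (1+d₂) ^ ((a₃+p22)+((b₂+py2)+b₃+1+ε))) := by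
        rw [rpow_split h1d₁0 (show p12+(a₁+(a₂+px2)+1+ε) = p12 + (a₁+(a₂+px2)+1+ε) from rfl),
          rpow_split h1d₂0 (show (a₃+p22)+((b₂+py2)+b₃+1+ε)
            = (a₃+p22) + ((b₂+py2)+b₃+1+ε) from rfl)]
        ring
    _ ≤ (W7*(K2*CJ12*CJ22)) * ((1+d₁) ^ (δ+ε) * (1+d₂) ^ (2*τ)) := by
        apply mul_le_mul_of_nonneg_left htrans2
        exact mul_nonneg hW7pos.le (mul_nonneg (mul_nonneg hK2 hCJ12pos.le) hCJ22pos.le)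
    _ ≤ (W7*(K2*CJ12*CJ22)) * (CT * (Real.sqrt (1+d₁^2) ^ (δ+ε)
          * (Real.sqrt (1+d₂^2) ^ τ * Real.sqrt (1+(d₁+d₂)^2) ^ τ))) := by
        apply mul_le_mul_of_nonneg_left htarget
        exact mul_nonneg hW7pos.le (mul_nonneg (mul_nonneg hK2 hCJ12pos.le) hCJ22pos.le)
    _ = (W7*(K2*CJ12*CJ22)*CT) * (Real.sqrt (1+d₁^2) ^ (δ+ε)
          * (Real.sqrt (1+d₂^2) ^ τ * Real.sqrt (1+(d₁+d₂)^2) ^ τ)) := by ring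
  refine le_trans key (le_trans (add_le_add hterm1 hterm2) (le_of_eq ?_))
  rw [abs_eq, abs_eq, abs_eq]
  rw [show (v₃-v₁)^2 = (d₁+d₂)^2 by rw [hd₁, hd₂]; ring]
  ring


lemma HF_A {c b₁ : ℝ} (hc : 0 ≤ c) (hb₁ : 0 ≤ b₁) :
    ∀ x y d₁ d₂ : ℝ, 0 ≤ x → x ≤ d₁ → 0 ≤ y → y ≤ d₂ → d₁ ≤ d₂ →
    (1+(x+y))^c * (1+(y+d₁))^b₁ ≤
      (2:ℝ)^(c+b₁) * ((1+x)^c * (1+y)^(0:ℝ) * (1+d₁)^(0:ℝ) * (1+d₂)^b₁)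
      + (2:ℝ)^(c+b₁) * ((1+x)^(0:ℝ) * (1+y)^c * (1+d₁)^(0:ℝ) * (1+d₂)^b₁) := by
  intro x y d₁ d₂ hx hxd hy hyd hdd
  have h1 : (1+(x+y))^c ≤ 2^c * ((1+x)^c + (1+y)^c) := by
    have h := sum_split (show (1:ℝ) ≤ 1+x by linarith) (show (1:ℝ) ≤ 1+y by linarith) c
    rw [abs_of_nonneg hc] at h
    rw [show (1:ℝ)+(x+y) = (1+x)+(1+y)-1 by ring]
    exact h
  have h2 : (1+(y+d₁))^b₁ ≤ 2^b₁ * (1+d₂)^b₁ :=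
    pow_two_le (by linarith) (by linarith) hb₁
  calc (1+(x+y))^c * (1+(y+d₁))^b₁
      ≤ (2^c * ((1+x)^c + (1+y)^c)) * (2^b₁ * (1+d₂)^b₁) := by
        apply mul_le_mul h1 h2 (Real.rpow_nonneg (by linarith) _)
        have := Real.rpow_nonneg (show (0:ℝ) ≤ 1+x by linarith) c
        have := Real.rpow_nonneg (show (0:ℝ) ≤ 1+y by linarith) c
        positivity
  _ = (2:ℝ)^(c+b₁) * ((1+x)^c * (1+y)^(0:ℝ) * (1+d₁)^(0:ℝ) * (1+d₂)^b₁)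
      + (2:ℝ)^(c+b₁) * ((1+x)^(0:ℝ) * (1+y)^c * (1+d₁)^(0:ℝ) * (1+d₂)^b₁) := by
      rw [rpow_split (show (0:ℝ) < 2 by norm_num) (show c+b₁ = c + b₁ from rfl)]
      simp only [Real.rpow_zero, mul_one, one_mul]
      ring

lemma HF_B {c b₁ θ : ℝ} (hc : 0 ≤ c) (hb₁ : b₁ < 0) (hθ0 : 0 ≤ θ) (hθ1 : θ ≤ 1) :
    ∀ x y d₁ d₂ : ℝ, 0 ≤ x → x ≤ d₁ → 0 ≤ y → y ≤ d₂ → d₁ ≤ d₂ →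
    (1+(x+y))^c * (1+(y+d₁))^b₁ ≤
      (2:ℝ)^c * ((1+x)^c * (1+y)^(0:ℝ) * (1+d₁)^b₁ * (1+d₂)^(0:ℝ))
      + (2:ℝ)^c * ((1+x)^(0:ℝ) * (1+y)^(c+θ*b₁) * (1+d₁)^((1-θ)*b₁) * (1+d₂)^(0:ℝ)) := by
  intro x y d₁ d₂ hx hxd hy hyd hdd
  have hd₁0 : (0:ℝ) < 1 + d₁ := by linarith
  have hy1 : (1:ℝ) ≤ 1 + y := by linarith
  have h1 : (1+(x+y))^c ≤ 2^c * ((1+x)^c + (1+y)^c) := by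
    have h := sum_split (show (1:ℝ) ≤ 1+x by linarith) hy1 c
    rw [abs_of_nonneg hc] at h
    rw [show (1:ℝ)+(x+y) = (1+x)+(1+y)-1 by ring]
    exact h
  have h2a : (1+(y+d₁))^b₁ ≤ (1+d₁)^b₁ :=
    nonpos_exp_mono hd₁0 (by linarith) hb₁.le
  have h2b : (1+(y+d₁))^b₁ ≤ (1+y)^(θ*b₁) * (1+d₁)^((1-θ)*b₁) :=
    prod_split hy1 (by linarith) (by linarith) (by linarith) hb₁.le hθ0 hθ1
  have hQ : (0:ℝ) ≤ (1+(y+d₁))^b₁ := Real.rpow_nonneg (by linarith) _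
  calc (1+(x+y))^c * (1+(y+d₁))^b₁
      ≤ (2^c * ((1+x)^c + (1+y)^c)) * (1+(y+d₁))^b₁ :=
        mul_le_mul_of_nonneg_right h1 hQ
  _ = 2^c * (1+x)^c * (1+(y+d₁))^b₁ + 2^c * (1+y)^c * (1+(y+d₁))^b₁ := by ring
  _ ≤ 2^c * (1+x)^c * (1+d₁)^b₁
      + 2^c * (1+y)^c * ((1+y)^(θ*b₁) * (1+d₁)^((1-θ)*b₁)) := by
      apply add_le_add
      · apply mul_le_mul_of_nonneg_left h2a
        exact mul_nonneg (by positivity) (Real.rpow_nonneg (by linarith) _)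
      · apply mul_le_mul_of_nonneg_left h2b
        exact mul_nonneg (by positivity) (Real.rpow_nonneg (by linarith) _)
  _ = (2:ℝ)^c * ((1+x)^c * (1+y)^(0:ℝ) * (1+d₁)^b₁ * (1+d₂)^(0:ℝ))
      + (2:ℝ)^c * ((1+x)^(0:ℝ) * (1+y)^(c+θ*b₁) * (1+d₁)^((1-θ)*b₁) * (1+d₂)^(0:ℝ)) := by
      rw [rpow_split (show (0:ℝ) < 1+y by linarith) (show c+θ*b₁ = c + θ*b₁ from rfl)]
      simp only [Real.rpow_zero, mul_one, one_mul]
      ring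

lemma HF_C {c b₁ φ : ℝ} (hc : c < 0) (hb₁ : b₁ < 0) (hφ0 : 0 ≤ φ) (hφ1 : φ ≤ 1) :
    ∀ x y d₁ d₂ : ℝ, 0 ≤ x → x ≤ d₁ → 0 ≤ y → y ≤ d₂ → d₁ ≤ d₂ →
    (1+(x+y))^c * (1+(y+d₁))^b₁ ≤
      1 * ((1+x)^(φ*c) * (1+y)^((1-φ)*c) * (1+d₁)^b₁ * (1+d₂)^(0:ℝ))
      + 1 * ((1+x)^(φ*c) * (1+y)^((1-φ)*c) * (1+d₁)^b₁ * (1+d₂)^(0:ℝ)) := by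
  intro x y d₁ d₂ hx hxd hy hyd hdd
  have hd₁0 : (0:ℝ) < 1 + d₁ := by linarith
  have h1 : (1+(x+y))^c ≤ (1+x)^(φ*c) * (1+y)^((1-φ)*c) :=
    prod_split (by linarith) (by linarith) (by linarith) (by linarith) hc.le hφ0 hφ1
  have h2 : (1+(y+d₁))^b₁ ≤ (1+d₁)^b₁ :=
    nonpos_exp_mono hd₁0 (by linarith) hb₁.le
  have hT : (1+(x+y))^c * (1+(y+d₁))^b₁
      ≤ (1+x)^(φ*c) * (1+y)^((1-φ)*c) * (1+d₁)^b₁ := by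
    apply mul_le_mul h1 h2 (Real.rpow_nonneg (by linarith) _)
    exact mul_nonneg (Real.rpow_nonneg (by linarith) _) (Real.rpow_nonneg (by linarith) _)
  have hTn : (0:ℝ) ≤ (1+x)^(φ*c) * (1+y)^((1-φ)*c) * (1+d₁)^b₁ * (1+d₂)^(0:ℝ) := by
    apply mul_nonneg (mul_nonneg (mul_nonneg (Real.rpow_nonneg (by linarith) _)
      (Real.rpow_nonneg (by linarith) _)) (Real.rpow_nonneg (by linarith) _))
      (Real.rpow_nonneg (by linarith) _)
  simp only [Real.rpow_zero, mul_one, one_mul] at hTn ⊢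
  linarith [hT, hTn]

lemma HF_D {c b₁ φy φd : ℝ} (hc : c < 0) (hb₁ : 0 ≤ b₁) (hφy0 : 0 ≤ φy) (hφy1 : φy ≤ 1)
    (hφd0 : 0 ≤ φd) (hφd1 : φd ≤ 1) :
    ∀ x y d₁ d₂ : ℝ, 0 ≤ x → x ≤ d₁ → 0 ≤ y → y ≤ d₂ → d₁ ≤ d₂ →
    (1+(x+y))^c * (1+(y+d₁))^b₁ ≤
      (2:ℝ)^b₁ * ((1+x)^(φy*c) * (1+y)^((1-φy)*c+b₁) * (1+d₁)^(0:ℝ) * (1+d₂)^(0:ℝ))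
      + (2:ℝ)^b₁ * ((1+x)^(φd*c) * (1+y)^((1-φd)*c) * (1+d₁)^b₁ * (1+d₂)^(0:ℝ)) := by
  intro x y d₁ d₂ hx hxd hy hyd hdd
  have hx1 : (1:ℝ) ≤ 1+x := by linarith
  have hy1 : (1:ℝ) ≤ 1+y := by linarith
  have hd₁1 : (1:ℝ) ≤ 1+d₁ := by linarith
  have h2 : (1+(y+d₁))^b₁ ≤ 2^b₁ * ((1+y)^b₁ + (1+d₁)^b₁) := by
    have h := sum_split hy1 hd₁1 b₁
    rw [abs_of_nonneg hb₁] at h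
    rw [show (1:ℝ)+(y+d₁) = (1+y)+(1+d₁)-1 by ring]
    exact h
  have h1y : (1+(x+y))^c ≤ (1+x)^(φy*c) * (1+y)^((1-φy)*c) :=
    prod_split hx1 hy1 (by linarith) (by linarith) hc.le hφy0 hφy1
  have h1d : (1+(x+y))^c ≤ (1+x)^(φd*c) * (1+y)^((1-φd)*c) :=
    prod_split hx1 hy1 (by linarith) (by linarith) hc.le hφd0 hφd1
  have hPn : (0:ℝ) ≤ (1+(x+y))^c := Real.rpow_nonneg (by linarith) _
  calc (1+(x+y))^c * (1+(y+d₁))^b₁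
      ≤ (1+(x+y))^c * (2^b₁ * ((1+y)^b₁ + (1+d₁)^b₁)) :=
        mul_le_mul_of_nonneg_left h2 hPn
  _ = 2^b₁ * ((1+(x+y))^c * (1+y)^b₁) + 2^b₁ * ((1+(x+y))^c * (1+d₁)^b₁) := by ring
  _ ≤ 2^b₁ * (((1+x)^(φy*c) * (1+y)^((1-φy)*c)) * (1+y)^b₁)
      + 2^b₁ * (((1+x)^(φd*c) * (1+y)^((1-φd)*c)) * (1+d₁)^b₁) := by
      apply add_le_add
      · apply mul_le_mul_of_nonneg_left
          (mul_le_mul_of_nonneg_right h1y (Real.rpow_nonneg (by linarith) _)) (by positivity)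
      · apply mul_le_mul_of_nonneg_left
          (mul_le_mul_of_nonneg_right h1d (Real.rpow_nonneg (by linarith) _)) (by positivity)
  _ = (2:ℝ)^b₁ * ((1+x)^(φy*c) * (1+y)^((1-φy)*c+b₁) * (1+d₁)^(0:ℝ) * (1+d₂)^(0:ℝ))
      + (2:ℝ)^b₁ * ((1+x)^(φd*c) * (1+y)^((1-φd)*c) * (1+d₁)^b₁ * (1+d₂)^(0:ℝ)) := by
      rw [rpow_split (show (0:ℝ) < 1+y by linarith)
        (show (1-φy)*c+b₁ = (1-φy)*c + b₁ from rfl)]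
      simp only [Real.rpow_zero, mul_one, one_mul]
      ring

/-- choice of the splitting parameter for `c < 0` (cap 1). -/
lemma phiD {ε a₂ b₂ c : ℝ} (hε : 0 < ε) (ha₂ : -1-ε < a₂) (hb₂ : -1-ε < b₂)
    (habc : -2-ε < a₂+b₂+c) (hc : c < 0) :
    ∃ φ : ℝ, 0 ≤ φ ∧ φ ≤ 1 ∧ -1-ε < a₂ + φ*c ∧ -1-ε < b₂ + (1-φ)*c := by
  have hnc : (0:ℝ) < -c := by linarith
  have hcne : c ≠ 0 := ne_of_lt hc
  set s := a₂ + 1 + ε/2 with hs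
  refine ⟨max 0 (min 1 (s/(-c))), le_max_left _ _, ?_, ?_, ?_⟩
  · exact max_le (by norm_num) (min_le_left _ _)
  · rcases le_total s 0 with h | h
    · have h1 : s/(-c) ≤ 0 := div_nonpos_iff.2 (Or.inr ⟨h, hnc.le⟩)
      have h2 : min 1 (s/(-c)) ≤ 0 := le_trans (min_le_right _ _) h1
      rw [max_eq_left h2]
      simpa using ha₂
    · have h3 : max 0 (min 1 (s/(-c))) ≤ s/(-c) :=
        max_le (div_nonneg h hnc.le) (min_le_right _ _)
      have h4 : max 0 (min 1 (s/(-c))) * (-c) ≤ s := by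
        calc max 0 (min 1 (s/(-c))) * (-c) ≤ (s/(-c)) * (-c) :=
            mul_le_mul_of_nonneg_right h3 hnc.le
        _ = s := by field_simp
      have : a₂ + max 0 (min 1 (s/(-c))) * c ≥ a₂ - s := by nlinarith
      rw [hs] at this; linarith
  · rcases le_total s 0 with h | h
    · have h1 : s/(-c) ≤ 0 := div_nonpos_iff.2 (Or.inr ⟨h, hnc.le⟩)
      have h2 : min 1 (s/(-c)) ≤ 0 := le_trans (min_le_right _ _) h1
      rw [max_eq_left h2]
      rw [hs] at h
      have : -1 - ε/2 < b₂ + c := by linarith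
      simpa using (by linarith : -1-ε < b₂ + (1-0)*c)
    · rcases le_total 1 (s/(-c)) with h5 | h5
      · rw [max_eq_right (by linarith [le_min (le_refl (1:ℝ)) h5] :
          (0:ℝ) ≤ min 1 (s/(-c))), min_eq_left h5]
        simpa using hb₂
      · have h6 : min 1 (s/(-c)) = s/(-c) := min_eq_right h5
        rw [h6, max_eq_right (div_nonneg h hnc.le)]
        have h7 : (s/(-c)) * c = -s := by field_simp
        have : b₂ + (1 - s/(-c))*c = b₂ + c + s := by
          have : (1 - s/(-c))*c = c - (s/(-c))*c := by ring
          rw [this, h7]; ring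
        rw [this, hs]
        linarith
  
/-- choice of the splitting parameter for `c < 0`, `0 ≤ b₁` (capped version). -/
lemma phiY {ε a₂ b₁ b₂ c : ℝ} (hε : 0 < ε) (ha₂ : -1-ε < a₂) (hb₂ : -1-ε < b₂)
    (habc : -2-ε < a₂+b₂+c) (hc : c < 0) (hb₁ : 0 ≤ b₁) :
    ∃ φ : ℝ, 0 ≤ φ ∧ φ ≤ 1 ∧ -1-ε < a₂ + φ*c ∧ -1-ε < b₂ + ((1-φ)*c + b₁) ∧
      (1-φ)*c + b₁ ≤ max (b₁+c) 0 := by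
  have hnc : (0:ℝ) < -c := by linarith
  have hcne : c ≠ 0 := ne_of_lt hc
  set s := a₂ + 1 + ε/2 with hs
  set m := max (-(b₁+c)) 0 with hm
  have hm0 : 0 ≤ m := le_max_right _ _
  have hmc : m ≤ -c := max_le (by linarith) hnc.le
  refine ⟨max 0 (min (m/(-c)) (s/(-c))), le_max_left _ _, ?_, ?_, ?_, ?_⟩
  · apply max_le (by norm_num)
    calc min (m/(-c)) (s/(-c)) ≤ m/(-c) := min_le_left _ _
    _ ≤ 1 := by rw [div_le_one hnc]; exact hmc
  · -- a₂ + φ c > -1-ε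
    rcases le_total s 0 with h | h
    · have h1 : s/(-c) ≤ 0 := div_nonpos_iff.2 (Or.inr ⟨h, hnc.le⟩)
      have h2 : min (m/(-c)) (s/(-c)) ≤ 0 := le_trans (min_le_right _ _) h1
      rw [max_eq_left h2]
      simpa using ha₂
    · have h3 : max 0 (min (m/(-c)) (s/(-c))) ≤ s/(-c) :=
        max_le (div_nonneg h hnc.le) (min_le_right _ _)
      have h4 : max 0 (min (m/(-c)) (s/(-c))) * (-c) ≤ s := by
        calc max 0 (min (m/(-c)) (s/(-c))) * (-c) ≤ (s/(-c)) * (-c) :=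
            mul_le_mul_of_nonneg_right h3 hnc.le
        _ = s := by field_simp
      have : a₂ + max 0 (min (m/(-c)) (s/(-c))) * c ≥ a₂ - s := by nlinarith
      rw [hs] at this; linarith
  · -- b₂ + ((1-φ)c + b₁) > -1-ε
    rcases le_total s 0 with h | h
    · have h1 : s/(-c) ≤ 0 := div_nonpos_iff.2 (Or.inr ⟨h, hnc.le⟩)
      have h2 : min (m/(-c)) (s/(-c)) ≤ 0 := le_trans (min_le_right _ _) h1
      rw [max_eq_left h2]
      rw [hs] at h
      have : -1 - ε/2 < b₂ + c := by linarith
      have hgoal : -1-ε < b₂ + ((1-0)*c + b₁) := by linarith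
      simpa using hgoal
    · rcases le_total (m/(-c)) (s/(-c)) with h5 | h5
      · -- φ = m/(-c); value b₂ + max(b₁+c,0)
        rw [min_eq_left h5, max_eq_right (div_nonneg (by linarith) hnc.le)]
        have h7 : (m/(-c)) * c = -m := by field_simp
        have hval : b₂ + ((1 - m/(-c))*c + b₁) = b₂ + (b₁ + c + m) := by
          have : (1 - m/(-c))*c = c - (m/(-c))*c := by ring
          rw [this, h7]; ring
        rw [hval]
        have : 0 ≤ b₁ + c + m := by
          rw [hm]; rcases le_total (b₁+c) 0 with h8 | h8
          · rw [max_eq_left (by linarith)]; linarith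
          · rw [max_eq_right (by linarith)]; linarith
        linarith
      · -- φ = s/(-c)
        rw [min_eq_right h5, max_eq_right (div_nonneg h hnc.le)]
        have h7 : (s/(-c)) * c = -s := by field_simp
        have hval : b₂ + ((1 - s/(-c))*c + b₁) = b₂ + c + s + b₁ := by
          have : (1 - s/(-c))*c = c - (s/(-c))*c := by ring
          rw [this, h7]; ring
        rw [hval, hs]
        linarith
  · -- (1-φ)c + b₁ ≤ max (b₁+c) 0
    have hφm : max 0 (min (m/(-c)) (s/(-c))) * (-c) ≤ m := by
      rcases le_total (min (m/(-c)) (s/(-c))) 0 with h | h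
      · rw [max_eq_left h]; simpa using hm0
      · rw [max_eq_right h]
        calc min (m/(-c)) (s/(-c)) * (-c) ≤ (m/(-c)) * (-c) :=
            mul_le_mul_of_nonneg_right (min_le_left _ _) hnc.le
        _ = m := by field_simp
    have hmax : b₁ + c + m = max (b₁+c) 0 := by
      rw [hm]; rcases le_total (b₁+c) 0 with h8 | h8
      · rw [max_eq_left (by linarith), max_eq_right h8]; ring
      · rw [max_eq_right (by linarith), max_eq_left h8]; ring
    nlinarith [hφm, hmax.le, hmax.ge]

end S9

open S9 in
/-- The elementary double-integral bound (Lemma on integrals of products of powers of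
`|1 + i(u−v)|`). -/
theorem statement9 (ε a₁ a₂ a₃ b₁ b₂ b₃ c : ℝ) (hε : 0 < ε)
    (ha₁ : -1 - ε < a₁) (ha₂ : -1 - ε < a₂) (ha₃ : -1 - ε < a₃)
    (hb₁ : -1 - ε < b₁) (hb₂ : -1 - ε < b₂) (hb₃ : -1 - ε < b₃)
    (habc : -2 - ε < a₂ + b₂ + c) :
    ∃ C : ℝ, ∀ v₁ v₂ v₃ : ℝ, v₁ < v₂ → v₂ < v₃ → v₂ - v₁ < v₃ - v₂ →
      (∫ u₁ in v₁..v₂, ∫ u₂ in v₂..v₃,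
          ‖1 + Complex.I * ((u₁ - u₂ : ℝ) : ℂ)‖ ^ c *
            (‖1 + Complex.I * ((u₁ - v₁ : ℝ) : ℂ)‖ ^ a₁ *
              ‖1 + Complex.I * ((u₁ - v₂ : ℝ) : ℂ)‖ ^ a₂ *
              ‖1 + Complex.I * ((u₁ - v₃ : ℝ) : ℂ)‖ ^ a₃) *
            (‖1 + Complex.I * ((u₂ - v₁ : ℝ) : ℂ)‖ ^ b₁ *
              ‖1 + Complex.I * ((u₂ - v₂ : ℝ) : ℂ)‖ ^ b₂ *
              ‖1 + Complex.I * ((u₂ - v₃ : ℝ) : ℂ)‖ ^ b₃)) ≤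
        C * ‖1 + Complex.I * ((v₃ - v₁ : ℝ) : ℂ)‖ ^
              ((a₁ + a₂ + a₃ + b₁ + b₂ + b₃ + c + 2 -
                  min (a₁ + a₂ + 1) (a₁ + a₂ + b₁ + c + 1)) / 2 + ε) *
            ‖1 + Complex.I * ((v₃ - v₂ : ℝ) : ℂ)‖ ^
              ((a₁ + a₂ + a₃ + b₁ + b₂ + b₃ + c + 2 -
                  min (a₁ + a₂ + 1) (a₁ + a₂ + b₁ + c + 1)) / 2 + ε) *
            ‖1 + Complex.I * ((v₂ - v₁ : ℝ) : ℂ)‖ ^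
              (min (a₁ + a₂ + 1) (a₁ + a₂ + b₁ + c + 1) + ε) := by
  rcases le_or_gt 0 c with hc | hc
  · rcases le_or_gt 0 b₁ with hb | hb
    · -- Case A : 0 ≤ c, 0 ≤ b₁
      exact main_of_data ε a₁ a₂ a₃ b₁ b₂ b₃ c c 0 0 b₁ ((2:ℝ)^(c+b₁)) 0 c 0 b₁ ((2:ℝ)^(c+b₁))
        hε ha₁ hb₃ (by positivity) (by positivity)
        (by linarith) (by linarith) (by linarith) (by linarith)
        (by have := le_max_left (b₁+c) (0:ℝ); linarith)
        (by linarith)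
        (by have := le_max_left (b₁+c) (0:ℝ); linarith)
        (by linarith)
        (HF_A hc hb)
    · -- Case B : 0 ≤ c, b₁ < 0
      set θ := min 1 (c/(-b₁)) with hθ
      have hnb : (0:ℝ) < -b₁ := by linarith
      have hθ0 : 0 ≤ θ := le_min (by norm_num) (div_nonneg hc hnb.le)
      have hθ1 : θ ≤ 1 := min_le_left _ _
      rcases le_total c (-b₁) with hcb | hcb
      · -- θ = c/(-b₁), c + θ*b₁ = 0
        have hθv : θ = c/(-b₁) := min_eq_right ((div_le_one hnb).2 hcb)
        have hval : c + θ*b₁ = 0 := by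
          rw [hθv]; field_simp [hb.ne]; ring
        exact main_of_data ε a₁ a₂ a₃ b₁ b₂ b₃ c c 0 b₁ 0 ((2:ℝ)^c)
          0 (c+θ*b₁) ((1-θ)*b₁) 0 ((2:ℝ)^c)
          hε ha₁ hb₃ (by positivity) (by positivity)
          (by linarith) (by linarith) (by linarith) (by linarith)
          (by have := le_max_right (b₁+c) (0:ℝ); linarith)
          (by linarith)
          (by have := le_max_right (b₁+c) (0:ℝ); linarith)
          (by have h9 : θ*b₁ + (1-θ)*b₁ = b₁ := by ring
              linarith)
          (HF_B hc hb hθ0 hθ1)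
      · -- θ = 1, c + θ*b₁ = c + b₁ ≥ 0
        have hθv : θ = 1 := min_eq_left ((one_le_div hnb).2 hcb)
        have hval : c + θ*b₁ = c + b₁ := by rw [hθv]; ring
        exact main_of_data ε a₁ a₂ a₃ b₁ b₂ b₃ c c 0 b₁ 0 ((2:ℝ)^c)
          0 (c+θ*b₁) ((1-θ)*b₁) 0 ((2:ℝ)^c)
          hε ha₁ hb₃ (by positivity) (by positivity)
          (by linarith) (by linarith) (by linarith) (by linarith)
          (by have := le_max_right (b₁+c) (0:ℝ); linarith)
          (by linarith)
          (by have := le_max_left (b₁+c) (0:ℝ); linarith)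
          (by have h9 : θ*b₁ + (1-θ)*b₁ = b₁ := by ring
              linarith)
          (HF_B hc hb hθ0 hθ1)
  · rcases le_or_gt 0 b₁ with hb | hb
    · -- Case D : c < 0, 0 ≤ b₁
      obtain ⟨φy, hφy0, hφy1, hqy1, hqy2, hCy⟩ := phiY hε ha₂ hb₂ habc hc hb
      obtain ⟨φd, hφd0, hφd1, hqd1, hqd2⟩ := phiD hε ha₂ hb₂ habc hc
      refine main_of_data ε a₁ a₂ a₃ b₁ b₂ b₃ c (φy*c) ((1-φy)*c+b₁) 0 0 ((2:ℝ)^b₁)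
        (φd*c) ((1-φd)*c) b₁ 0 ((2:ℝ)^b₁)
        hε ha₁ hb₃ (by positivity) (by positivity)
        hqy1 hqy2 hqd1 hqd2
        (by linarith)
        (by have h9 : φy*c + ((1-φy)*c+b₁) = b₁ + c := by ring
            linarith)
        (by have h9 : (0:ℝ) ≤ (1-φd) := by linarith
            have h10 : (1-φd)*c ≤ 0 := mul_nonpos_of_nonneg_of_nonpos h9 hc.le
            have := le_max_right (b₁+c) (0:ℝ); linarith)
        (by have h9 : φd*c + (1-φd)*c = c := by ring
            linarith)
        (HF_D hc hb hφy0 hφy1 hφd0 hφd1)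
    · -- Case C : c < 0, b₁ < 0
      obtain ⟨φ, hφ0, hφ1, hqa, hqb⟩ := phiD hε ha₂ hb₂ habc hc
      refine main_of_data ε a₁ a₂ a₃ b₁ b₂ b₃ c (φ*c) ((1-φ)*c) b₁ 0 1
        (φ*c) ((1-φ)*c) b₁ 0 1
        hε ha₁ hb₃ (by norm_num) (by norm_num)
        hqa hqb hqa hqb
        (by have h9 : (0:ℝ) ≤ (1-φ) := by linarith
            have h10 : (1-φ)*c ≤ 0 := mul_nonpos_of_nonneg_of_nonpos h9 hc.le
            have := le_max_right (b₁+c) (0:ℝ); linarith)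
        (by have h9 : φ*c + (1-φ)*c = c := by ring
            linarith)
        (by have h9 : (0:ℝ) ≤ (1-φ) := by linarith
            have h10 : (1-φ)*c ≤ 0 := mul_nonpos_of_nonneg_of_nonpos h9 hc.le
            have := le_max_right (b₁+c) (0:ℝ); linarith)
        (by have h9 : φ*c + (1-φ)*c = c := by ring
            linarith)
        (HF_C hc hb hφ0 hφ1)
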